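/- Let ((g,[2]),D) be a ResLieDer pair over F and (V,ρ,η) a restricted representation of it. Then for every k ≥ 3 and every k-cochain (φ_k,ω_k) with values in V, δ(d^kω_k) = d^k(δω_k) as maps g^k → V, where on the left δ is applied to the (k+1)-cochain (d^kφ_k, d^kω_k) and on the right the d^k-formula for the ω-component is applied to the k-cochain (δφ_k, δω_k). -/

import Mathlib

/-- The differential `dⁿ` on the `φ`-component of raw cochains (`n = m+1`), char 2. -/
def dOp {F : Type*} [Field F] {g : Type*} [LieRing g] [LieAlgebra F g]
    {V : Type*} [AddCommGroup V] [Module F V]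
    (ρ : g →ₗ[F] Module.End F V) (m : ℕ)
    (φ : (Fin (m + 1) → g) → V) : (Fin (m + 2) → g) → V := fun z =>
  (∑ i : Fin (m + 2), ρ (z i) (φ (i.removeNth z))) +
  ∑ i : Fin (m + 2), ∑ j : Fin (m + 2),
    if h : (i : ℕ) < (j : ℕ) then
      φ (Fin.cons ⁅z i, z j⁆
        ((⟨(i : ℕ), by have := j.isLt; omega⟩ : Fin (m + 1)).removeNth (j.removeNth z)))
    else 0

/-- The operator `δ` applied to the `φ`-component of a raw cochain. -/
def deltaOp {F : Type*} [Field F] {g : Type*} [LieRing g] [LieAlgebra F g]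
    {V : Type*} [AddCommGroup V] [Module F V]
    (D : g →ₗ[F] g) (η : Module.End F V) (m : ℕ)
    (φ : (Fin m → g) → V) : (Fin m → g) → V := fun z =>
  η (φ z) + ∑ i : Fin m, φ (Function.update z i (D (z i)))

/-- The `ω`-component of the differential `d^k` of a `k`-cochain `(φ,ω)` where `k = m+3`;
the first argument of `ω` (the distinguished argument `x`) is separated out:
`(d^kω)(x,z₁,…,z_{k−1}) = ρ(x)(φ(x,z₁,…,z_{k−1})) + φ(x^{[2]},z₁,…,z_{k−1})
 + Σᵢ φ([x,zᵢ],x,z₁,…,ẑᵢ,…) + Σᵢ ρ(zᵢ)(ω(x,z₁,…,ẑᵢ,…))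
 + Σ_{i<j} ω(x,[zᵢ,zⱼ],z₁,…,ẑᵢ,…,ẑⱼ,…)`. -/
def dOmegaOp {F : Type*} [Field F] {g : Type*} [LieRing g] [LieAlgebra F g]
    {V : Type*} [AddCommGroup V] [Module F V]
    (ρ : g →ₗ[F] Module.End F V) (sq : g → g) (m : ℕ)
    (φ : (Fin (m + 3) → g) → V) (ω : g → (Fin (m + 1) → g) → V) :
    g → (Fin (m + 2) → g) → V := fun x z =>
  ρ x (φ (Fin.cons x z)) + φ (Fin.cons (sq x) z) +
  (∑ i : Fin (m + 2), φ (Fin.cons ⁅x, z i⁆ (Fin.cons x (i.removeNth z)))) +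
  (∑ i : Fin (m + 2), ρ (z i) (ω x (i.removeNth z))) +
  ∑ i : Fin (m + 2), ∑ j : Fin (m + 2),
    if h : (i : ℕ) < (j : ℕ) then
      ω x (Fin.cons ⁅z i, z j⁆
        ((⟨(i : ℕ), by have := j.isLt; omega⟩ : Fin (m + 1)).removeNth (j.removeNth z)))
    else 0

/-- The `ω`-component of the operator `δ` on a `k`-cochain `(φ,ω)`, `k = m'+2` where
`φ : g^{m'+2} → V` and `ω : g × g^{m'} → V`:
`(δω)(x,z₂,…,z_{k−1}) = η(ω(x,z₂,…)) + Σᵢ ω(x,…,D(zᵢ),…) + φ(x,D(x),z₂,…,z_{k−1})`. -/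
def deltaOmegaOp {F : Type*} [Field F] {g : Type*} [LieRing g] [LieAlgebra F g]
    {V : Type*} [AddCommGroup V] [Module F V]
    (D : g →ₗ[F] g) (η : Module.End F V) (m : ℕ)
    (φ : (Fin (m + 2) → g) → V) (ω : g → (Fin m → g) → V) :
    g → (Fin m → g) → V := fun x z =>
  η (ω x z) + (∑ i : Fin m, ω x (Function.update z i (D (z i)))) +
  φ (Fin.cons x (Fin.cons (D x) z))


section Aux
variable {n : ℕ} {α : Type*} {V : Type*} [AddCommGroup V]

lemma char2_add_self (F : Type*) [Field F] [CharP F 2] {V : Type*} [AddCommGroup V] [Module F V]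
    (v : V) : v + v = 0 := by
  have h2 : (2 : F) = 0 := by
    have := CharP.cast_eq_zero F 2
    simpa using this
  have : (2 : F) • v = 0 := by rw [h2, zero_smul]
  rwa [two_smul] at this

lemma removeNth_succ_cons (a : α) (w : Fin (n+1) → α) (i : Fin (n+1)) :
    Fin.removeNth (α := fun _ => α) (Fin.succ i) (Fin.cons a w) = Fin.cons a (i.removeNth w) := by
  ext s
  simp only [Fin.removeNth]
  induction s using Fin.cases with
  | zero => simp [Fin.succAbove]
  | succ s => rw [Fin.succ_succAbove_succ]; simp; rfl

lemma sum_dite_fixed {c : Prop} [Decidable c] {ι : Type*} [Fintype ι] (f : c → ι → V) :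
    (∑ i : ι, if h : c then f h i else 0) = if h : c then ∑ i : ι, f h i else 0 := by
  split <;> simp

lemma pairSum_peel (G : (i j : Fin (n+2)) → (i:ℕ) < (j:ℕ) → V) :
    (∑ i : Fin (n+2), ∑ j : Fin (n+2), if h : (i:ℕ) < (j:ℕ) then G i j h else 0) =
    (∑ j : Fin (n+1), G 0 j.succ (by simp)) +
      ∑ i : Fin (n+1), ∑ j : Fin (n+1),
        if h : (i:ℕ) < (j:ℕ) then G i.succ j.succ (by simpa using h) else 0 := by
  rw [Fin.sum_univ_succ]
  congr 1
  · rw [Fin.sum_univ_succ]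
    simp
  · apply Finset.sum_congr rfl
    intro i _
    rw [Fin.sum_univ_succ]
    simp

lemma cons_comp_swap01 (a b : α) (w : Fin n → α) :
    (Fin.cons a (Fin.cons b w) : Fin (n+2) → α) ∘ Equiv.swap 0 1 =
      Fin.cons b (Fin.cons a w) := by
  funext s
  simp only [Function.comp_apply]
  induction s using Fin.cases with
  | zero =>
    rw [Equiv.swap_apply_left, Fin.cons_zero, ← Fin.succ_zero_eq_one, Fin.cons_succ, Fin.cons_zero]
  | succ s =>
    induction s using Fin.cases with
    | zero =>
      rw [Fin.succ_zero_eq_one, Equiv.swap_apply_right, Fin.cons_zero, ← Fin.succ_zero_eq_one,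
        Fin.cons_succ, Fin.cons_zero]
    | succ s =>
      have h1 : (s.succ.succ : Fin (n+2)) ≠ 0 := Fin.succ_ne_zero _
      have h2 : (s.succ.succ : Fin (n+2)) ≠ 1 := by
        rw [← Fin.succ_zero_eq_one]
        simp only [ne_eq, Fin.succ_inj]
        exact Fin.succ_ne_zero _
      rw [Equiv.swap_apply_of_ne_of_ne h1 h2, Fin.cons_succ, Fin.cons_succ, Fin.cons_succ,
        Fin.cons_succ]

lemma cons_comp_swap_succ (a : α) (u : Fin (n+1) → α) (i j : Fin (n+1)) :
    (Fin.cons a u : Fin (n+2) → α) ∘ Equiv.swap i.succ j.succ =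
      Fin.cons a (u ∘ Equiv.swap i j) := by
  funext s
  simp only [Function.comp_apply]
  induction s using Fin.cases with
  | zero =>
    rw [Equiv.swap_apply_of_ne_of_ne (Fin.succ_ne_zero i).symm (Fin.succ_ne_zero j).symm,
      Fin.cons_zero, Fin.cons_zero]
  | succ t =>
    rw [Fin.cons_succ, Function.comp_apply]
    rcases eq_or_ne t i with rfl | hi
    · rw [Equiv.swap_apply_left, Equiv.swap_apply_left, Fin.cons_succ]
    rcases eq_or_ne t j with rfl | hj
    · rw [Equiv.swap_apply_right, Equiv.swap_apply_right, Fin.cons_succ]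
    · rw [Equiv.swap_apply_of_ne_of_ne (by simpa [Fin.succ_inj] using hi)
        (by simpa [Fin.succ_inj] using hj),
        Equiv.swap_apply_of_ne_of_ne hi hj, Fin.cons_succ]

variable {F : Type*} [Field F] {g' : Type*} [AddCommGroup g'] [Module F g'] [Module F V]

lemma alt_cons_add (φ : g' [⋀^Fin (n+1)]→ₗ[F] V) (a b : g') (w : Fin n → g') :
    φ (Fin.cons (a + b) w) = φ (Fin.cons a w) + φ (Fin.cons b w) := by
  have h := φ.map_update_add (Fin.cons a w) 0 a b
  simpa [Fin.update_cons_zero] using h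

lemma alt_cons_rotate [CharP F 2] (φ : g' [⋀^Fin (n+3)]→ₗ[F] V) (a b c : g')
    (w : Fin n → g') :
    φ (Fin.cons c (Fin.cons a (Fin.cons b w))) = φ (Fin.cons a (Fin.cons b (Fin.cons c w))) := by
  have hneg : ∀ v : V, -v = v := fun v => neg_eq_of_add_eq_zero_left (char2_add_self F v)
  have h01 : (0 : Fin (n+3)) ≠ 1 := by simp [Fin.ext_iff]
  have h12 : ((0 : Fin (n+2)).succ : Fin (n+3)) ≠ (1 : Fin (n+2)).succ := by
    simp [Fin.ext_iff]
    exact fun h => by rw [Nat.mod_eq_of_lt (by omega)] at h; omega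
  have step1 : φ (Fin.cons c (Fin.cons a (Fin.cons b w))) =
      φ (Fin.cons a (Fin.cons c (Fin.cons b w))) := by
    rw [← cons_comp_swap01 a c (Fin.cons b w), φ.map_swap _ h01, hneg]
  have step2 : φ (Fin.cons a (Fin.cons c (Fin.cons b w))) =
      φ (Fin.cons a (Fin.cons b (Fin.cons c w))) := by
    rw [show Fin.cons a (Fin.cons c (Fin.cons b w)) =
        (Fin.cons a (Fin.cons b (Fin.cons c w)) : Fin (n+3) → g') ∘
          Equiv.swap (0 : Fin (n+2)).succ (1 : Fin (n+2)).succ from ?_,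
      φ.map_swap _ h12, hneg]
    rw [cons_comp_swap_succ, cons_comp_swap01]
  rw [step1, step2]

lemma removeNth_apply (p : Fin (n+1)) (f : Fin (n+1) → α) (t : Fin n) :
    p.removeNth f t = f (p.succAbove t) := rfl

lemma removeNth_update_succAbove (z : Fin (n+1) → α) (j : Fin (n+1)) (t : Fin n) (w : α) :
    j.removeNth (Function.update z (j.succAbove t) w) = Function.update (j.removeNth z) t w := by
  ext s
  simp only [Fin.removeNth]
  rcases eq_or_ne s t with rfl | hs
  · simp
  · rw [Function.update_of_ne (fun h => hs (Fin.succAbove_right_injective h)),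
      Function.update_of_ne hs]
    rfl

lemma sum_offdiag_comm' (G : Fin (n+1) → Fin (n+1) → V) :
    ∑ i : Fin (n+1), ∑ t : Fin n, G i (i.succAbove t)
      = ∑ j : Fin (n+1), ∑ t : Fin n, G (j.succAbove t) j := by
  have h1 : ∀ i : Fin (n+1), ∑ t : Fin n, G i (i.succAbove t) = (∑ j, G i j) - G i i := by
    intro i; rw [Fin.sum_univ_succAbove (fun j => G i j) i]; abel
  have h2 : ∀ j : Fin (n+1), ∑ t : Fin n, G (j.succAbove t) j = (∑ i, G i j) - G j j := by
    intro j; rw [Fin.sum_univ_succAbove (fun i => G i j) j]; abel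
  simp only [h1, h2, Finset.sum_sub_distrib]
  rw [Finset.sum_comm]

lemma sum_update_split (z : Fin (n+1) → α) (d : α → α)
    (G : Fin (n+1) → α → (Fin n → α) → V) :
    (∑ i : Fin (n+1), ∑ j : Fin (n+1),
        G j (Function.update z i (d (z i)) j) (j.removeNth (Function.update z i (d (z i)))))
    = (∑ i : Fin (n+1), G i (d (z i)) (i.removeNth z))
      + ∑ j : Fin (n+1), ∑ t : Fin n,
          G j (z j) (Function.update (j.removeNth z) t (d (z (j.succAbove t)))) := by
  have step : ∀ i : Fin (n+1),
      (∑ j : Fin (n+1),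
        G j (Function.update z i (d (z i)) j) (j.removeNth (Function.update z i (d (z i)))))
      = G i (Function.update z i (d (z i)) i) (i.removeNth (Function.update z i (d (z i))))
        + ∑ t : Fin n, G (i.succAbove t) (Function.update z i (d (z i)) (i.succAbove t))
            ((i.succAbove t).removeNth (Function.update z i (d (z i)))) :=
    fun i => Fin.sum_univ_succAbove _ i
  simp only [step]
  rw [Finset.sum_add_distrib]
  congr 1
  · refine Finset.sum_congr rfl fun i _ => ?_
    rw [Function.update_self, Fin.removeNth_update]
  · rw [sum_offdiag_comm' (fun i j =>
      G j (Function.update z i (d (z i)) j) (j.removeNth (Function.update z i (d (z i)))))]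
    refine Finset.sum_congr rfl fun j _ => Finset.sum_congr rfl fun t _ => ?_
    rw [Function.update_of_ne (Fin.succAbove_ne j t).symm, removeNth_update_succAbove]

lemma Finmk_succ (k : ℕ) (hh : k + 1 < n + 1) :
    (⟨k+1, hh⟩ : Fin (n+1)) = Fin.succ ⟨k, by omega⟩ := rfl

lemma sum_split_two (H : Fin (n+2) → V) (i j : Fin (n+2)) (h : (i:ℕ) < (j:ℕ)) :
    ∑ s, H s = H i + H j +
      ∑ t : Fin n, H (j.succAbove ((⟨(i:ℕ), by have := j.isLt; omega⟩ : Fin (n+1)).succAbove t)) := by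
  rw [Fin.sum_univ_succAbove H j,
    Fin.sum_univ_succAbove (fun t => H (j.succAbove t)) ⟨(i:ℕ), by have := j.isLt; omega⟩]
  have hji : j.succAbove ⟨(i:ℕ), by have := j.isLt; omega⟩ = i := by
    rw [Fin.succAbove_of_castSucc_lt]
    · rfl
    · rw [Fin.lt_iff_val_lt_val]; simpa using h
  rw [hji]; abel

lemma prm_update_lt (z : Fin (n+2) → α) (i j : Fin (n+2)) (h : (i:ℕ) < (j:ℕ)) (w : α) :
    (⟨(i:ℕ), by have := j.isLt; omega⟩ : Fin (n+1)).removeNth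
        (j.removeNth (Function.update z i w)) =
      (⟨(i:ℕ), by have := j.isLt; omega⟩ : Fin (n+1)).removeNth (j.removeNth z) := by
  have hi : i = j.succAbove ⟨(i:ℕ), by have := j.isLt; omega⟩ := by
    rw [Fin.succAbove_of_castSucc_lt]
    · rfl
    · rw [Fin.lt_iff_val_lt_val]; simpa using h
  conv_lhs => rw [show Function.update z i w =
    Function.update z (j.succAbove ⟨(i:ℕ), by have := j.isLt; omega⟩) w by
      conv_rhs => rw [← hi]]
  rw [removeNth_update_succAbove, Fin.removeNth_update]

lemma prm_update_right (z : Fin (n+2) → α) (i j : Fin (n+2)) (h : (i:ℕ) < (j:ℕ)) (w : α) :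
    (⟨(i:ℕ), by have := j.isLt; omega⟩ : Fin (n+1)).removeNth
        (j.removeNth (Function.update z j w)) =
      (⟨(i:ℕ), by have := j.isLt; omega⟩ : Fin (n+1)).removeNth (j.removeNth z) := by
  rw [Fin.removeNth_update]

lemma prm_update_emb (z : Fin (n+2) → α) (i j : Fin (n+2)) (h : (i:ℕ) < (j:ℕ)) (t : Fin n)
    (w : α) :
    (⟨(i:ℕ), by have := j.isLt; omega⟩ : Fin (n+1)).removeNth
        (j.removeNth (Function.update z
          (j.succAbove ((⟨(i:ℕ), by have := j.isLt; omega⟩ : Fin (n+1)).succAbove t)) w)) =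
      Function.update
        ((⟨(i:ℕ), by have := j.isLt; omega⟩ : Fin (n+1)).removeNth (j.removeNth z)) t w := by
  rw [removeNth_update_succAbove, removeNth_update_succAbove]

lemma emb_ne_right (i j : Fin (n+2)) (h : (i:ℕ) < (j:ℕ)) (t : Fin n) :
    j.succAbove ((⟨(i:ℕ), by have := j.isLt; omega⟩ : Fin (n+1)).succAbove t) ≠ j :=
  Fin.succAbove_ne j _

lemma emb_ne_left (i j : Fin (n+2)) (h : (i:ℕ) < (j:ℕ)) (t : Fin n) :
    j.succAbove ((⟨(i:ℕ), by have := j.isLt; omega⟩ : Fin (n+1)).succAbove t) ≠ i := by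
  intro he
  have hi : j.succAbove ⟨(i:ℕ), by have := j.isLt; omega⟩ = i := by
    rw [Fin.succAbove_of_castSucc_lt]
    · rfl
    · rw [Fin.lt_iff_val_lt_val]; simpa using h
  exact Fin.succAbove_ne _ t (Fin.succAbove_right_injective (he.trans hi.symm))

lemma sum_update_pair_split (z : Fin (n+2) → α) (d : α → α)
    (G : Fin (n+2) → Fin (n+2) → α → α → (Fin n → α) → V) :
    (∑ i : Fin (n+2), ∑ j : Fin (n+2), ∑ l : Fin (n+2),
       if h : (j:ℕ) < (l:ℕ) then
         G j l (Function.update z i (d (z i)) j) (Function.update z i (d (z i)) l)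
           ((⟨(j:ℕ), by have := l.isLt; omega⟩ : Fin (n+1)).removeNth
             (l.removeNth (Function.update z i (d (z i)))))
       else 0)
    = (∑ j : Fin (n+2), ∑ l : Fin (n+2), if h : (j:ℕ) < (l:ℕ) then
         G j l (d (z j)) (z l)
           ((⟨(j:ℕ), by have := l.isLt; omega⟩ : Fin (n+1)).removeNth (l.removeNth z))
       else 0)
    + (∑ j : Fin (n+2), ∑ l : Fin (n+2), if h : (j:ℕ) < (l:ℕ) then
         G j l (z j) (d (z l))
           ((⟨(j:ℕ), by have := l.isLt; omega⟩ : Fin (n+1)).removeNth (l.removeNth z))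
       else 0)
    + (∑ j : Fin (n+2), ∑ l : Fin (n+2), if h : (j:ℕ) < (l:ℕ) then
         (∑ t : Fin n, G j l (z j) (z l)
           (Function.update
             ((⟨(j:ℕ), by have := l.isLt; omega⟩ : Fin (n+1)).removeNth (l.removeNth z)) t
             (d (z (l.succAbove
               ((⟨(j:ℕ), by have := l.isLt; omega⟩ : Fin (n+1)).succAbove t))))))
       else 0) := by
  have swap : (∑ i : Fin (n+2), ∑ j : Fin (n+2), ∑ l : Fin (n+2),
       if h : (j:ℕ) < (l:ℕ) then
         G j l (Function.update z i (d (z i)) j) (Function.update z i (d (z i)) l)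
           ((⟨(j:ℕ), by have := l.isLt; omega⟩ : Fin (n+1)).removeNth
             (l.removeNth (Function.update z i (d (z i)))))
       else 0)
      = ∑ j : Fin (n+2), ∑ l : Fin (n+2), ∑ i : Fin (n+2),
       if h : (j:ℕ) < (l:ℕ) then
         G j l (Function.update z i (d (z i)) j) (Function.update z i (d (z i)) l)
           ((⟨(j:ℕ), by have := l.isLt; omega⟩ : Fin (n+1)).removeNth
             (l.removeNth (Function.update z i (d (z i)))))
       else 0 := by
    rw [Finset.sum_comm]
    exact Finset.sum_congr rfl fun j _ => Finset.sum_comm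
  rw [swap]
  rw [← Finset.sum_add_distrib, ← Finset.sum_add_distrib]
  refine Finset.sum_congr rfl fun j _ => ?_
  rw [← Finset.sum_add_distrib, ← Finset.sum_add_distrib]
  refine Finset.sum_congr rfl fun l _ => ?_
  rw [sum_dite_fixed]
  by_cases h : (j:ℕ) < (l:ℕ)
  · rw [dif_pos h, dif_pos h, dif_pos h, dif_pos h]
    rw [sum_split_two _ j l h]
    congr 1
    · congr 1
      · rw [Function.update_self,
          Function.update_of_ne (Fin.ne_of_val_ne (by omega : (l:ℕ) ≠ (j:ℕ))),
          prm_update_lt z j l h]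
      · rw [Function.update_of_ne (Fin.ne_of_val_ne (by omega : (j:ℕ) ≠ (l:ℕ))),
          Function.update_self, prm_update_right z j l h]
    · refine Finset.sum_congr rfl fun t _ => ?_
      rw [Function.update_of_ne (emb_ne_left j l h t).symm,
        Function.update_of_ne (emb_ne_right j l h t).symm,
        prm_update_emb z j l h t]
  · rw [dif_neg h, dif_neg h, dif_neg h, dif_neg h]
    simp

end Aux

section Blocks

variable {F : Type*} [Field F] [CharP F 2]
    {g : Type*} [LieRing g] [LieAlgebra F g]
    {V : Type*} [AddCommGroup V] [Module F V]
    (sq : g → g) (D : g →ₗ[F] g) (ρ : g →ₗ[F] Module.End F V) (η : Module.End F V)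
    (m : ℕ) (φ : g [⋀^Fin (m + 3)]→ₗ[F] V) (ω : g → (Fin (m + 1) → g) → V)

/-- normal form -/
def Nform (x : g) (z : Fin (m + 2) → g) : V :=
  ρ x (η (φ (Fin.cons x z))) + ρ x (φ (Fin.cons (D x) z)) +
  (∑ i : Fin (m+2), ρ x (φ (Fin.cons x (Function.update z i (D (z i)))))) +
  η (φ (Fin.cons (sq x) z)) + φ (Fin.cons ⁅x, D x⁆ z) +
  (∑ i : Fin (m+2), φ (Fin.cons (sq x) (Function.update z i (D (z i))))) +
  (∑ i : Fin (m+2), η (φ (Fin.cons ⁅x, z i⁆ (Fin.cons x (i.removeNth z))))) +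
  (∑ i : Fin (m+2), φ (Fin.cons ⁅D x, z i⁆ (Fin.cons x (i.removeNth z)))) +
  (∑ i : Fin (m+2), φ (Fin.cons ⁅x, D (z i)⁆ (Fin.cons x (i.removeNth z)))) +
  (∑ i : Fin (m+2), φ (Fin.cons ⁅x, z i⁆ (Fin.cons (D x) (i.removeNth z)))) +
  (∑ i : Fin (m+2), ∑ t : Fin (m+1),
    φ (Fin.cons ⁅x, z i⁆
      (Fin.cons x (Function.update (i.removeNth z) t (D (z (i.succAbove t))))))) +
  (∑ i : Fin (m+2), ρ (z i) (η (ω x (i.removeNth z)))) +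
  (∑ i : Fin (m+2), ∑ t : Fin (m+1),
    ρ (z i) (ω x (Function.update (i.removeNth z) t (D (z (i.succAbove t)))))) +
  (∑ i : Fin (m+2), ρ (z i) (φ (Fin.cons x (Fin.cons (D x) (i.removeNth z))))) +
  (∑ i : Fin (m+2), ∑ j : Fin (m+2),
    if h : (i : ℕ) < (j : ℕ) then
      η (ω x (Fin.cons ⁅z i, z j⁆
        ((⟨(i : ℕ), by have := j.isLt; omega⟩ : Fin (m + 1)).removeNth (j.removeNth z))))
    else 0) +
  (∑ i : Fin (m+2), ∑ j : Fin (m+2),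
    if h : (i : ℕ) < (j : ℕ) then
      ω x (Fin.cons ⁅D (z i), z j⁆
        ((⟨(i : ℕ), by have := j.isLt; omega⟩ : Fin (m + 1)).removeNth (j.removeNth z)))
    else 0) +
  (∑ i : Fin (m+2), ∑ j : Fin (m+2),
    if h : (i : ℕ) < (j : ℕ) then
      ω x (Fin.cons ⁅z i, D (z j)⁆
        ((⟨(i : ℕ), by have := j.isLt; omega⟩ : Fin (m + 1)).removeNth (j.removeNth z)))
    else 0) +
  (∑ i : Fin (m+2), ∑ j : Fin (m+2),
    if h : (i : ℕ) < (j : ℕ) then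
      (∑ t : Fin m, ω x (Fin.cons ⁅z i, z j⁆
        (Function.update
          ((⟨(i : ℕ), by have := j.isLt; omega⟩ : Fin (m + 1)).removeNth (j.removeNth z)) t
          (D (z (j.succAbove
            ((⟨(i : ℕ), by have := j.isLt; omega⟩ : Fin (m + 1)).succAbove t)))))))
    else 0) +
  (∑ i : Fin (m+2), ∑ j : Fin (m+2),
    if h : (i : ℕ) < (j : ℕ) then
      φ (Fin.cons x (Fin.cons (D x) (Fin.cons ⁅z i, z j⁆
        ((⟨(i : ℕ), by have := j.isLt; omega⟩ : Fin (m + 1)).removeNth (j.removeNth z)))))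
    else 0)

variable (D' : g →ₗ[F] g)

lemma rhs_eq
    (hD_br : ∀ x y : g, D ⁅x, y⁆ = ⁅D x, y⁆ + ⁅x, D y⁆)
    (hD_sq : ∀ x : g, D (sq x) = ⁅x, D x⁆)
    (hω_lin : ∀ (x : g) (z : Fin (m + 1) → g) (i : Fin (m + 1)) (a : F) (u v : g),
      ω x (Function.update z i (a • u + v)) =
        a • ω x (Function.update z i u) + ω x (Function.update z i v))
    (x : g) (z : Fin (m + 2) → g) :
    dOmegaOp ρ sq m (deltaOp D η (m + 3) ⇑φ) (deltaOmegaOp D η (m + 1) ⇑φ ω) x z =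
      Nform sq D ρ η m φ ω x z := by
  have homega_add : ∀ (y a b : g) (w : Fin m → g),
      ω y (Fin.cons (a + b) w) = ω y (Fin.cons a w) + ω y (Fin.cons b w) := by
    intro y a b w
    have h := hω_lin y (Fin.cons a w) 0 1 a b
    simpa [Fin.update_cons_zero] using h
  have hsplit3 : ∀ (b : g) (w : Fin (m+2) → g),
      (∑ s : Fin (m+3), φ (Function.update (Fin.cons b w) s (D ((Fin.cons b w : Fin (m+3) → g) s))))
        = φ (Fin.cons (D b) w)
          + ∑ i : Fin (m+2), φ (Fin.cons b (Function.update w i (D (w i)))) := by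
    intro b w
    rw [Fin.sum_univ_succ]
    simp only [Fin.cons_zero, Fin.cons_succ, Fin.update_cons_zero, ← Fin.cons_update]
  have hR3 : ∀ i : Fin (m+2),
      (∑ s : Fin (m+3), φ (Function.update (Fin.cons ⁅x, z i⁆ (Fin.cons x (i.removeNth z))) s
          (D ((Fin.cons ⁅x, z i⁆ (Fin.cons x (i.removeNth z)) : Fin (m+3) → g) s))))
      = φ (Fin.cons ⁅D x, z i⁆ (Fin.cons x (i.removeNth z)))
        + φ (Fin.cons ⁅x, D (z i)⁆ (Fin.cons x (i.removeNth z)))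
        + φ (Fin.cons ⁅x, z i⁆ (Fin.cons (D x) (i.removeNth z)))
        + ∑ t : Fin (m+1), φ (Fin.cons ⁅x, z i⁆ (Fin.cons x
            (Function.update (i.removeNth z) t (D (z (i.succAbove t)))))) := by
    intro i
    rw [hsplit3, Fin.sum_univ_succ]
    simp only [Fin.cons_zero, Fin.cons_succ, Fin.update_cons_zero, ← Fin.cons_update,
      removeNth_apply]
    rw [hD_br, alt_cons_add]
    abel
  have hR5 : ∀ (i j : Fin (m+2)),
      (if h : (i : ℕ) < (j : ℕ) then
        η (ω x (Fin.cons ⁅z i, z j⁆ ((⟨(i : ℕ), by have := j.isLt; omega⟩ : Fin (m + 1)).removeNth (j.removeNth z))))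
        + (∑ s : Fin (m+1), ω x (Function.update (Fin.cons ⁅z i, z j⁆ ((⟨(i : ℕ), by have := j.isLt; omega⟩ : Fin (m + 1)).removeNth (j.removeNth z))) s
            (D ((Fin.cons ⁅z i, z j⁆ ((⟨(i : ℕ), by have := j.isLt; omega⟩ : Fin (m + 1)).removeNth (j.removeNth z)) : Fin (m+1) → g) s))))
        + φ (Fin.cons x (Fin.cons (D x) (Fin.cons ⁅z i, z j⁆ ((⟨(i : ℕ), by have := j.isLt; omega⟩ : Fin (m + 1)).removeNth (j.removeNth z)))))
      else 0)
      = (if h : (i : ℕ) < (j : ℕ) then η (ω x (Fin.cons ⁅z i, z j⁆ ((⟨(i : ℕ), by have := j.isLt; omega⟩ : Fin (m + 1)).removeNth (j.removeNth z)))) else 0)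
        + (if h : (i : ℕ) < (j : ℕ) then ω x (Fin.cons ⁅D (z i), z j⁆ ((⟨(i : ℕ), by have := j.isLt; omega⟩ : Fin (m + 1)).removeNth (j.removeNth z))) else 0)
        + (if h : (i : ℕ) < (j : ℕ) then ω x (Fin.cons ⁅z i, D (z j)⁆ ((⟨(i : ℕ), by have := j.isLt; omega⟩ : Fin (m + 1)).removeNth (j.removeNth z))) else 0)
        + (if h : (i : ℕ) < (j : ℕ) then
            (∑ t : Fin m, ω x (Fin.cons ⁅z i, z j⁆ (Function.update ((⟨(i : ℕ), by have := j.isLt; omega⟩ : Fin (m + 1)).removeNth (j.removeNth z)) t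
              (D (z (j.succAbove
                ((⟨(i : ℕ), by have := j.isLt; omega⟩ : Fin (m + 1)).succAbove t)))))))
          else 0)
        + (if h : (i : ℕ) < (j : ℕ) then
            φ (Fin.cons x (Fin.cons (D x) (Fin.cons ⁅z i, z j⁆ ((⟨(i : ℕ), by have := j.isLt; omega⟩ : Fin (m + 1)).removeNth (j.removeNth z))))) else 0) := by
    intro i j
    by_cases h : (i : ℕ) < (j : ℕ)
    · simp only [dif_pos h]
      rw [Fin.sum_univ_succ]
      simp only [Fin.cons_zero, Fin.cons_succ, Fin.update_cons_zero, ← Fin.cons_update,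
        removeNth_apply]
      rw [hD_br, homega_add]
      abel
    · simp only [dif_neg h]
      simp
  simp only [dOmegaOp, deltaOp, deltaOmegaOp]
  rw [hsplit3 x z, hsplit3 (sq x) z, hD_sq]
  simp only [hR3, hR5]
  simp only [map_add, map_sum]
  simp only [removeNth_apply]
  simp only [Finset.sum_add_distrib]
  simp only [Nform]
  abel

lemma lhs_eq
    (hD_br : ∀ x y : g, D ⁅x, y⁆ = ⁅D x, y⁆ + ⁅x, D y⁆)
    (hD_sq : ∀ x : g, D (sq x) = ⁅x, D x⁆)
    (hη : ∀ x : g, η * ρ x = ρ (D x) + ρ x * η)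
    (x : g) (z : Fin (m + 2) → g) :
    deltaOmegaOp D η (m + 2) (dOp ρ (m + 2) ⇑φ) (dOmegaOp ρ sq m ⇑φ ω) x z =
      Nform sq D ρ η m φ ω x z := by
  have hη' : ∀ (y : g) (v : V), η (ρ y v) = ρ (D y) v + ρ y (η v) := by
    intro y v
    have h := DFunLike.congr_fun (hη y) v
    simpa [Module.End.mul_apply] using h
  have hL1 : η (dOmegaOp ρ sq m ⇑φ ω x z) =
      ρ (D x) (φ (Fin.cons x z)) + ρ x (η (φ (Fin.cons x z)))
      + η (φ (Fin.cons (sq x) z))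
      + (∑ i : Fin (m+2), η (φ (Fin.cons ⁅x, z i⁆ (Fin.cons x (i.removeNth z)))))
      + ((∑ i : Fin (m+2), ρ (D (z i)) (ω x (i.removeNth z)))
         + ∑ i : Fin (m+2), ρ (z i) (η (ω x (i.removeNth z))))
      + ∑ i : Fin (m+2), ∑ j : Fin (m+2),
          (if h : (i : ℕ) < (j : ℕ) then η (ω x (Fin.cons ⁅z i, z j⁆ ((⟨(i : ℕ), by have := j.isLt; omega⟩ : Fin (m + 1)).removeNth (j.removeNth z)))) else 0) := by
    simp only [dOmegaOp, map_add, map_sum, hη', apply_dite (⇑η), map_zero,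
      Finset.sum_add_distrib]
  have hL2 : (∑ i : Fin (m+2), dOmegaOp ρ sq m ⇑φ ω x (Function.update z i (D (z i)))) =
      (∑ i : Fin (m+2), ρ x (φ (Fin.cons x (Function.update z i (D (z i))))))
      + (∑ i : Fin (m+2), φ (Fin.cons (sq x) (Function.update z i (D (z i)))))
      + ((∑ i : Fin (m+2), φ (Fin.cons ⁅x, D (z i)⁆ (Fin.cons x (i.removeNth z))))
        + ∑ i : Fin (m+2), ∑ t : Fin (m+1),
            φ (Fin.cons ⁅x, z i⁆
              (Fin.cons x (Function.update (i.removeNth z) t (D (z (i.succAbove t)))))))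
      + ((∑ i : Fin (m+2), ρ (D (z i)) (ω x (i.removeNth z)))
        + ∑ i : Fin (m+2), ∑ t : Fin (m+1),
            ρ (z i) (ω x (Function.update (i.removeNth z) t (D (z (i.succAbove t))))))
      + ((∑ i : Fin (m+2), ∑ j : Fin (m+2),
          if h : (i : ℕ) < (j : ℕ) then
            ω x (Fin.cons ⁅D (z i), z j⁆ ((⟨(i : ℕ), by have := j.isLt; omega⟩ : Fin (m + 1)).removeNth (j.removeNth z))) else 0)
        + (∑ i : Fin (m+2), ∑ j : Fin (m+2),
          if h : (i : ℕ) < (j : ℕ) then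
            ω x (Fin.cons ⁅z i, D (z j)⁆ ((⟨(i : ℕ), by have := j.isLt; omega⟩ : Fin (m + 1)).removeNth (j.removeNth z))) else 0)
        + (∑ i : Fin (m+2), ∑ j : Fin (m+2),
          if h : (i : ℕ) < (j : ℕ) then
            (∑ t : Fin m, ω x (Fin.cons ⁅z i, z j⁆
              (Function.update ((⟨(i : ℕ), by have := j.isLt; omega⟩ : Fin (m + 1)).removeNth (j.removeNth z)) t
                (D (z (j.succAbove
                  ((⟨(i : ℕ), by have := j.isLt; omega⟩ : Fin (m + 1)).succAbove t)))))))
          else 0)) := by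
    simp only [dOmegaOp, Finset.sum_add_distrib]
    rw [sum_update_split z (⇑D) (fun j a w => φ (Fin.cons ⁅x, a⁆ (Fin.cons x w))),
      sum_update_split z (⇑D) (fun j a w => ρ a (ω x w)),
      sum_update_pair_split z (⇑D) (fun j l a b w => ω x (Fin.cons ⁅a, b⁆ w))]
  have hchunk1 : (∑ j : Fin (m+3),
        φ (Fin.cons ⁅x, (Fin.cons (D x) z : Fin (m+3) → g) j⁆
          (Fin.removeNth (α := fun _ => g) j (Fin.cons (D x) z))))
      = φ (Fin.cons ⁅x, D x⁆ z)
        + ∑ t : Fin (m+2), φ (Fin.cons ⁅x, z t⁆ (Fin.cons (D x) (t.removeNth z))) := by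
    rw [Fin.sum_univ_succ]
    simp only [Fin.cons_zero, Fin.cons_succ, removeNth_succ_cons, Fin.removeNth_zero,
      Fin.tail_cons]
  have hrot : ∀ (i j : Fin (m+2)),
      (if h : (i : ℕ) < (j : ℕ) then
        φ (Fin.cons ⁅z i, z j⁆ (Fin.cons x (Fin.cons (D x) ((⟨(i : ℕ), by have := j.isLt; omega⟩ : Fin (m + 1)).removeNth (j.removeNth z))))) else 0)
      = (if h : (i : ℕ) < (j : ℕ) then
        φ (Fin.cons x (Fin.cons (D x) (Fin.cons ⁅z i, z j⁆ ((⟨(i : ℕ), by have := j.isLt; omega⟩ : Fin (m + 1)).removeNth (j.removeNth z))))) else 0) := by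
    intro i j
    by_cases h : (i : ℕ) < (j : ℕ)
    · rw [dif_pos h, dif_pos h, alt_cons_rotate]
    · rw [dif_neg h, dif_neg h]
  have hL3 : dOp ρ (m+2) ⇑φ (Fin.cons x (Fin.cons (D x) z)) =
      (ρ x (φ (Fin.cons (D x) z)) + ρ (D x) (φ (Fin.cons x z))
        + ∑ i : Fin (m+2), ρ (z i) (φ (Fin.cons x (Fin.cons (D x) (i.removeNth z)))))
      + (φ (Fin.cons ⁅x, D x⁆ z)
        + (∑ i : Fin (m+2), φ (Fin.cons ⁅x, z i⁆ (Fin.cons (D x) (i.removeNth z))))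
        + (∑ i : Fin (m+2), φ (Fin.cons ⁅D x, z i⁆ (Fin.cons x (i.removeNth z))))
        + ∑ i : Fin (m+2), ∑ j : Fin (m+2),
            (if h : (i : ℕ) < (j : ℕ) then
              φ (Fin.cons x (Fin.cons (D x) (Fin.cons ⁅z i, z j⁆ ((⟨(i : ℕ), by have := j.isLt; omega⟩ : Fin (m + 1)).removeNth (j.removeNth z))))) else 0)) := by
    simp only [dOp]
    congr 1
    · rw [Fin.sum_univ_succ, Fin.sum_univ_succ]
      simp only [Fin.cons_zero, Fin.cons_succ, Fin.removeNth_zero, Fin.tail_cons,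
        removeNth_succ_cons]
      abel
    · rw [pairSum_peel, pairSum_peel]
      simp only [Fin.cons_zero, Fin.cons_succ, Fin.val_succ, Fin.val_zero, Fin.mk_zero,
        Finmk_succ, removeNth_succ_cons, Fin.removeNth_zero, Fin.tail_cons]
      rw [hchunk1]
      simp only [hrot]
      abel
  simp only [deltaOmegaOp]
  rw [hL1, hL2, hL3]
  have hdup1 : ρ (D x) (φ (Fin.cons x z)) + ρ (D x) (φ (Fin.cons x z)) = 0 :=
    char2_add_self F _
  have hdup2 : (∑ i : Fin (m+2), ρ (D (z i)) (ω x (i.removeNth z)))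
      + (∑ i : Fin (m+2), ρ (D (z i)) (ω x (i.removeNth z))) = 0 :=
    char2_add_self F _
  trans (Nform sq D ρ η m φ ω x z
      + (ρ (D x) (φ (Fin.cons x z)) + ρ (D x) (φ (Fin.cons x z)))
      + ((∑ i : Fin (m+2), ρ (D (z i)) (ω x (i.removeNth z)))
        + ∑ i : Fin (m+2), ρ (D (z i)) (ω x (i.removeNth z))))
  · simp only [Nform]
    abel
  · rw [hdup1, hdup2, add_zero, add_zero]

end Blocks

/-- for every `k ≥ 3` (here `k = m + 3`) and every `k`-cochain `(φ,ω)` with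
values in `V`, `δ(d^kω) = d^k(δω)`, where on the left `δ` is applied to the
`(k+1)`-cochain `(d^kφ, d^kω)` and on the right the `d^k`-formula for the `ω`-component
is applied to the `k`-cochain `(δφ, δω)`. -/
theorem stmt3
    {F : Type*} [Field F] [CharP F 2]
    {g : Type*} [LieRing g] [LieAlgebra F g]
    {V : Type*} [AddCommGroup V] [Module F V]
    (sq : g → g)
    (hsq_ad : ∀ x y : g, ⁅sq x, y⁆ = ⁅x, ⁅x, y⁆⁆)
    (hsq_smul : ∀ (a : F) (x : g), sq (a • x) = a ^ 2 • sq x)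
    (hsq_add : ∀ x y : g, sq (x + y) = sq x + sq y + ⁅x, y⁆)
    (D : g →ₗ[F] g)
    (hD_br : ∀ x y : g, D ⁅x, y⁆ = ⁅D x, y⁆ + ⁅x, D y⁆)
    (hD_sq : ∀ x : g, D (sq x) = ⁅x, D x⁆)
    (ρ : g →ₗ[F] Module.End F V)
    (hρ_br : ∀ x y : g, ρ ⁅x, y⁆ = ρ x * ρ y - ρ y * ρ x)
    (hρ_sq : ∀ x : g, ρ (sq x) = ρ x * ρ x)
    (η : Module.End F V)
    (hη : ∀ x : g, η * ρ x = ρ (D x) + ρ x * η)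
    -- a k-cochain (φ, ω), k = m + 3
    (m : ℕ) (φ : g [⋀^Fin (m + 3)]→ₗ[F] V) (ω : g → (Fin (m + 1) → g) → V)
    (hω_smul : ∀ (a : F) (x : g) (z : Fin (m + 1) → g), ω (a • x) z = a ^ 2 • ω x z)
    (hω_add : ∀ (x y : g) (z : Fin (m + 1) → g),
      ω (x + y) z = ω x z + ω y z + φ (Fin.cons x (Fin.cons y z)))
    (hω_lin : ∀ (x : g) (z : Fin (m + 1) → g) (i : Fin (m + 1)) (a : F) (u v : g),
      ω x (Function.update z i (a • u + v)) =
        a • ω x (Function.update z i u) + ω x (Function.update z i v)) :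
    deltaOmegaOp D η (m + 2) (dOp ρ (m + 2) ⇑φ) (dOmegaOp ρ sq m ⇑φ ω) =
      dOmegaOp ρ sq m (deltaOp D η (m + 3) ⇑φ) (deltaOmegaOp D η (m + 1) ⇑φ ω) := by
  funext x z
  rw [lhs_eq sq D ρ η m φ ω hD_br hD_sq hη x z, rhs_eq sq D ρ η m φ ω hD_br hD_sq hω_lin x z]
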